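/- Let H be a Hopf algebra with invertible antipode S and B = A^{coH} ⊆ A a Hopf-Galois extension. Then the second Galois map χ̃: A ⊗_B A → A ⊗ H, a ⊗_B a' ↦ a_{(0)} a' ⊗ a_{(1)} is also bijective, with inverse given by a ⊗ h ↦ S^{-1}(h)^{⟨1⟩} ⊗_B S^{-1}(h)^{⟨2⟩} a, where τ(h) = h^{⟨1⟩} ⊗_B h^{⟨2⟩} denotes the translation map of the first Galois map χ(a ⊗_B a') = a a'_{(0)} ⊗ a'_{(1)}. -/

import Mathlib

/-!
Statement 1: the second Galois map `χ̃ : A ⊗_B A → A ⊗ H`, `a ⊗ a' ↦ a₍₀₎ a' ⊗ a₍₁₎`,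
of a Hopf-Galois extension `B = A^{co H} ⊆ A` over a Hopf algebra `H` with invertible
antipode `S` is also bijective, with inverse `a ⊗ h ↦ S⁻¹(h)⁽¹⁾ ⊗_B S⁻¹(h)⁽²⁾ a`.

Since Mathlib has no tensor products over the (possibly noncommutative) subring `B`,
the tensor product `A ⊗_B A` is realized concretely as the quotient of `A ⊗[k] A`
by the `B`-balancing relations, where `B` is the coinvariant subalgebra.
Sweedler-type expressions are handled through chosen finite presentations (lists of
simple tensors) of the relevant elements.
-/

open TensorProduct

set_option synthInstance.maxHeartbeats 400000
set_option maxHeartbeats 1000000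

noncomputable section

variable (k : Type) [Field k]
variable (H : Type) [Ring H] [HopfAlgebra k H]
variable (A : Type) [Ring A] [Algebra k A]

/-- Sum of a list of simple tensors in `A ⊗[k] A`. -/
def sumAA (l : List (A × A)) : A ⊗[k] A := (l.map fun p => p.1 ⊗ₜ[k] p.2).sum

/-- Sum of a list of simple tensors in `A ⊗[k] H`. -/
def sumAH (l : List (A × H)) : A ⊗[k] H := (l.map fun p => p.1 ⊗ₜ[k] p.2).sum

variable (ρ : A →ₐ[k] A ⊗[k] H)

/-- Coassociativity of the right `H`-coaction `ρ` on `A`. -/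
def IsCoassoc : Prop :=
  ∀ a : A, (LinearMap.rTensor H ρ.toLinearMap) (ρ a)
    = (TensorProduct.assoc k A H H).symm
        ((LinearMap.lTensor A (Coalgebra.comul (R := k))) (ρ a))

/-- Counitality of the right `H`-coaction `ρ` on `A`. -/
def IsCounital : Prop :=
  ∀ a : A, (TensorProduct.rid k A) ((LinearMap.lTensor A (Coalgebra.counit (R := k))) (ρ a)) = a

lemma coinv_mul {a b : A} (ha : ρ a = a ⊗ₜ[k] 1) (hb : ρ b = b ⊗ₜ[k] 1) :
    ρ (a * b) = (a * b) ⊗ₜ[k] 1 := by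
  rw [map_mul, ha, hb, Algebra.TensorProduct.tmul_mul_tmul, mul_one]

lemma coinv_one : ρ (1 : A) = (1 : A) ⊗ₜ[k] 1 := by
  simp only [map_one, Algebra.TensorProduct.one_def]

lemma coinv_add {a b : A} (ha : ρ a = a ⊗ₜ[k] 1) (hb : ρ b = b ⊗ₜ[k] 1) :
    ρ (a + b) = (a + b) ⊗ₜ[k] 1 := by
  rw [map_add, ha, hb, ← TensorProduct.add_tmul]

lemma coinv_algebraMap (c : k) : ρ (algebraMap k A c) = (algebraMap k A c) ⊗ₜ[k] 1 := by
  rw [AlgHom.commutes, Algebra.TensorProduct.algebraMap_apply]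

/-- The subalgebra `B = A^{co H}` of coinvariants. -/
def coinv : Subalgebra k A where
  carrier := {a | ρ a = a ⊗ₜ[k] 1}
  mul_mem' := fun ha hb => coinv_mul k H A ρ ha hb
  one_mem' := coinv_one k H A ρ
  add_mem' := fun ha hb => coinv_add k H A ρ ha hb
  algebraMap_mem' := fun c => coinv_algebraMap k H A ρ c

/-- The `B`-balancing relations defining `A ⊗_B A` as a quotient of `A ⊗[k] A`. -/
def hgRel : Submodule k (A ⊗[k] A) :=
  Submodule.span k
    {x | ∃ a a' b, b ∈ coinv k H A ρ ∧ x = (a * b) ⊗ₜ[k] a' - a ⊗ₜ[k] (b * a')}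

/-- `A ⊗_B A`. -/
abbrev HGT := (A ⊗[k] A) ⧸ hgRel k H A ρ

/-- Canonical projection `A ⊗[k] A → A ⊗_B A`. -/
def mkT : A ⊗[k] A →ₗ[k] HGT k H A ρ := (hgRel k H A ρ).mkQ

/-- The Galois map, before descending to `A ⊗_B A`:  `a ⊗ a' ↦ a a'₍₀₎ ⊗ a'₍₁₎`. -/
def chi0 : A ⊗[k] A →ₗ[k] A ⊗[k] H :=
  (LinearMap.rTensor H (LinearMap.mul' k A)) ∘ₗ
    ((TensorProduct.assoc k A A H).symm.toLinearMap) ∘ₗ (LinearMap.lTensor A ρ.toLinearMap)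

lemma chi0_tmul (x y : A) :
    chi0 k H A ρ (x ⊗ₜ[k] y) = (LinearMap.rTensor H (LinearMap.mulLeft k x)) (ρ y) := by
  have aux : ∀ z : A ⊗[k] H,
      (LinearMap.rTensor H (LinearMap.mul' k A))
        ((TensorProduct.assoc k A A H).symm (x ⊗ₜ[k] z))
        = (LinearMap.rTensor H (LinearMap.mulLeft k x)) z := by
    intro z
    induction z using TensorProduct.induction_on with
    | zero => rw [TensorProduct.tmul_zero]; simp only [map_zero]
    | tmul c h =>
        simp only [TensorProduct.assoc_symm_tmul, LinearMap.rTensor_tmul,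
          LinearMap.mul'_apply, LinearMap.mulLeft_apply]
    | add u v hu hv =>
        rw [TensorProduct.tmul_add, map_add, map_add, hu, hv, map_add]
  simp only [chi0, LinearMap.coe_comp, Function.comp_apply, LinearMap.lTensor_tmul,
    LinearEquiv.coe_coe]
  exact aux (ρ y)

lemma hgRel_le_ker : hgRel k H A ρ ≤ LinearMap.ker (chi0 k H A ρ) := by
  rw [hgRel, Submodule.span_le]
  rintro x ⟨a, a', b, hb, rfl⟩
  have hb' : ρ b = b ⊗ₜ[k] 1 := hb
  have aux : ∀ z : A ⊗[k] H,
      (LinearMap.rTensor H (LinearMap.mulLeft k a)) ((b ⊗ₜ[k] (1 : H)) * z)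
        = (LinearMap.rTensor H (LinearMap.mulLeft k (a * b))) z := by
    intro z
    induction z using TensorProduct.induction_on with
    | zero => simp
    | tmul c h => simp [Algebra.TensorProduct.tmul_mul_tmul, mul_assoc]
    | add u v hu hv => simp [mul_add, map_add, hu, hv]
  simp only [SetLike.mem_coe, LinearMap.mem_ker, map_sub, chi0_tmul]
  rw [map_mul, hb', aux (ρ a'), sub_self]

/-- The Galois map `χ : A ⊗_B A → A ⊗[k] H`. -/
def chiq : HGT k H A ρ →ₗ[k] A ⊗[k] H :=
  Submodule.liftQ (hgRel k H A ρ) (chi0 k H A ρ) (hgRel_le_ker k H A ρ)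


/-- The second Galois map before descending to `A ⊗_B A`:  `a ⊗ a' ↦ a₍₀₎ a' ⊗ a₍₁₎`. -/
def chit0 : A ⊗[k] A →ₗ[k] A ⊗[k] H :=
  (LinearMap.rTensor H (LinearMap.mul' k A)) ∘ₗ
    ((TensorProduct.assoc k A A H).symm.toLinearMap) ∘ₗ
      (LinearMap.lTensor A (TensorProduct.comm k H A).toLinearMap) ∘ₗ
        ((TensorProduct.assoc k A H A).toLinearMap) ∘ₗ
          (LinearMap.rTensor A ρ.toLinearMap)

lemma chit0_tmul (x y : A) :
    chit0 k H A ρ (x ⊗ₜ[k] y) = (LinearMap.rTensor H (LinearMap.mulRight k y)) (ρ x) := by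
  have aux : ∀ z : A ⊗[k] H,
      (LinearMap.rTensor H (LinearMap.mul' k A))
        ((TensorProduct.assoc k A A H).symm
          ((LinearMap.lTensor A (TensorProduct.comm k H A).toLinearMap)
            ((TensorProduct.assoc k A H A) (z ⊗ₜ[k] y))))
        = (LinearMap.rTensor H (LinearMap.mulRight k y)) z := by
    intro z
    induction z using TensorProduct.induction_on with
    | zero => rw [TensorProduct.zero_tmul]; simp only [map_zero]
    | tmul c h =>
        simp only [TensorProduct.assoc_tmul, LinearMap.lTensor_tmul, LinearEquiv.coe_coe,
          TensorProduct.comm_tmul, TensorProduct.assoc_symm_tmul, LinearMap.rTensor_tmul,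
          LinearMap.mul'_apply, LinearMap.mulRight_apply]
    | add u v hu hv =>
        rw [TensorProduct.add_tmul]
        simp only [map_add]
        rw [hu, hv]
  simp only [chit0, LinearMap.coe_comp, Function.comp_apply, LinearMap.rTensor_tmul,
    LinearEquiv.coe_coe]
  exact aux (ρ x)

lemma hgRel_le_ker' : hgRel k H A ρ ≤ LinearMap.ker (chit0 k H A ρ) := by
  rw [hgRel, Submodule.span_le]
  rintro x ⟨a, a', b, hb, rfl⟩
  have hb' : ρ b = b ⊗ₜ[k] 1 := hb
  have aux : ∀ z : A ⊗[k] H,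
      (LinearMap.rTensor H (LinearMap.mulRight k a')) (z * (b ⊗ₜ[k] (1 : H)))
        = (LinearMap.rTensor H (LinearMap.mulRight k (b * a'))) z := by
    intro z
    induction z using TensorProduct.induction_on with
    | zero => simp
    | tmul c h => simp [Algebra.TensorProduct.tmul_mul_tmul, mul_assoc]
    | add u v hu hv => simp [add_mul, map_add, hu, hv]
  simp only [SetLike.mem_coe, LinearMap.mem_ker, map_sub, chit0_tmul]
  rw [map_mul, hb', aux (ρ a), sub_self]

/-- The second Galois map `χ̃ : A ⊗_B A → A ⊗[k] H`. -/
def chitq : HGT k H A ρ →ₗ[k] A ⊗[k] H :=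
  Submodule.liftQ (hgRel k H A ρ) (chit0 k H A ρ) (hgRel_le_ker' k H A ρ)

/-- Right multiplication by `a ∈ A` on the second tensor leg of `A ⊗_B A`. -/
def rmulT (a : A) : HGT k H A ρ →ₗ[k] HGT k H A ρ :=
  Submodule.liftQ (hgRel k H A ρ)
    ((mkT k H A ρ) ∘ₗ (LinearMap.lTensor A (LinearMap.mulRight k a)))
    (by
      refine Submodule.span_le.mpr ?_
      rintro x ⟨c, c', b, hb, rfl⟩
      simp only [SetLike.mem_coe, LinearMap.mem_ker, map_sub, LinearMap.coe_comp,
        Function.comp_apply, LinearMap.lTensor_tmul, LinearMap.mulRight_apply]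
      rw [← map_sub, mkT]
      rw [Submodule.mkQ_apply, Submodule.Quotient.mk_eq_zero]
      exact Submodule.subset_span ⟨c, c' * a, b, hb, by rw [mul_assoc]⟩)

/-! ### Auxiliary machinery for the proof -/

/-- The map `a ⊗ h ↦ Σ a₍₀₎ ⊗ q (a₍₁₎ ⊗ h)` for a linear map `q : H ⊗ H → H`. -/
def Xq (q : H ⊗[k] H →ₗ[k] H) : A ⊗[k] H →ₗ[k] A ⊗[k] H :=
  (LinearMap.lTensor A q) ∘ₗ (TensorProduct.assoc k A H H).toLinearMap ∘ₗ
    (LinearMap.rTensor H ρ.toLinearMap)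

lemma Xq_tmul (q : H ⊗[k] H →ₗ[k] H) (a : A) (h : H) :
    Xq k H A ρ q (a ⊗ₜ[k] h)
      = (LinearMap.lTensor A q) ((TensorProduct.assoc k A H H) (ρ a ⊗ₜ[k] h)) := by
  simp [Xq]

/-- Master composition lemma for maps of the form `Xq`. -/
lemma Xq_comp_Xq (hcoassoc : IsCoassoc k H A ρ) (hcounit : IsCounital k H A ρ)
    (q1 q2 r : H ⊗[k] H →ₗ[k] H)
    (hq : ∀ (n₁ n₂ h : H), q2 (n₁ ⊗ₜ[k] q1 (n₂ ⊗ₜ[k] h)) = r (n₁ ⊗ₜ[k] n₂) * h)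
    (hr : ∀ n : H, r (Coalgebra.comul (R := k) n)
      = algebraMap k H (Coalgebra.counit (R := k) n)) :
    (Xq k H A ρ q2) ∘ₗ (Xq k H A ρ q1) = LinearMap.id := by
  apply TensorProduct.ext'
  intro a h
  have s1 : ∀ z : A ⊗[k] H,
      LinearMap.rTensor H ρ.toLinearMap
        ((LinearMap.lTensor A q1) ((TensorProduct.assoc k A H H) (z ⊗ₜ[k] h)))
      = LinearMap.lTensor (A ⊗[k] H) q1
          ((TensorProduct.assoc k (A ⊗[k] H) H H)
            ((LinearMap.rTensor H ρ.toLinearMap z) ⊗ₜ[k] h)) := by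
    intro z
    induction z using TensorProduct.induction_on with
    | zero => simp
    | tmul c n => simp
    | add u v hu hv => simp only [TensorProduct.add_tmul, map_add, hu, hv]
  have s3 : ∀ (c : A) (w : H ⊗[k] H),
      (LinearMap.lTensor A q2) ((TensorProduct.assoc k A H H)
        ((LinearMap.lTensor (A ⊗[k] H) q1) ((TensorProduct.assoc k (A ⊗[k] H) H H)
          (((TensorProduct.assoc k A H H).symm (c ⊗ₜ[k] w)) ⊗ₜ[k] h))))
      = c ⊗ₜ[k] (r w * h) := by
    intro c w
    induction w using TensorProduct.induction_on with
    | zero => simp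
    | tmul n₁ n₂ => simp [hq n₁ n₂ h]
    | add u v hu hv =>
        simp only [TensorProduct.tmul_add, map_add, TensorProduct.add_tmul, hu, hv, add_mul]
  have s2 : ∀ z : A ⊗[k] H,
      (LinearMap.lTensor A q2) ((TensorProduct.assoc k A H H)
        ((LinearMap.lTensor (A ⊗[k] H) q1) ((TensorProduct.assoc k (A ⊗[k] H) H H)
          (((TensorProduct.assoc k A H H).symm
            ((LinearMap.lTensor A (Coalgebra.comul (R := k))) z)) ⊗ₜ[k] h))))
      = ((TensorProduct.rid k A) ((LinearMap.lTensor A (Coalgebra.counit (R := k))) z))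
          ⊗ₜ[k] h := by
    intro z
    induction z using TensorProduct.induction_on with
    | zero => simp
    | tmul c n =>
        rw [LinearMap.lTensor_tmul, s3 c, hr n, LinearMap.lTensor_tmul,
          TensorProduct.rid_tmul, ← Algebra.smul_def, TensorProduct.tmul_smul,
          TensorProduct.smul_tmul']
    | add u v hu hv => simp only [map_add, TensorProduct.add_tmul, hu, hv]
  rw [LinearMap.comp_apply, LinearMap.id_apply, Xq_tmul]
  rw [show (Xq k H A ρ q2) = (LinearMap.lTensor A q2) ∘ₗ (TensorProduct.assoc k A H H).toLinearMap
      ∘ₗ (LinearMap.rTensor H ρ.toLinearMap) from rfl]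
  simp only [LinearMap.comp_apply, LinearEquiv.coe_coe]
  rw [s1 (ρ a), hcoassoc a, s2 (ρ a), hcounit a]

/-- `qS : h ⊗ m ↦ S(h) * m`. -/
def qS : H ⊗[k] H →ₗ[k] H :=
  (LinearMap.mul' k H) ∘ₗ (LinearMap.rTensor H (HopfAlgebra.antipode (R := k)))

lemma XqS_comp_Xmul (hcoassoc : IsCoassoc k H A ρ) (hcounit : IsCounital k H A ρ) :
    (Xq k H A ρ (qS k H)) ∘ₗ (Xq k H A ρ (LinearMap.mul' k H)) = LinearMap.id := by
  refine Xq_comp_Xq k H A ρ hcoassoc hcounit _ _ (qS k H) ?_ ?_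
  · intro n₁ n₂ h
    simp [qS, mul_assoc]
  · intro n
    simpa only [qS, LinearMap.comp_apply] using HopfAlgebra.mul_antipode_rTensor_comul_apply (R := k) (A := H) n

lemma Xmul_comp_XqS (hcoassoc : IsCoassoc k H A ρ) (hcounit : IsCounital k H A ρ) :
    (Xq k H A ρ (LinearMap.mul' k H)) ∘ₗ (Xq k H A ρ (qS k H)) = LinearMap.id := by
  refine Xq_comp_Xq k H A ρ hcoassoc hcounit _ _
    ((LinearMap.mul' k H) ∘ₗ (LinearMap.lTensor H (HopfAlgebra.antipode (R := k)))) ?_ ?_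
  · intro n₁ n₂ h
    simp [qS, mul_assoc]
  · intro n
    simpa using HopfAlgebra.mul_antipode_lTensor_comul_apply (R := k) (A := H) n

/-- The twisting map `W : a ⊗ h ↦ Σ a₍₀₎ ⊗ a₍₁₎ S(h)`. -/
def Wmap : A ⊗[k] H →ₗ[k] A ⊗[k] H :=
  (Xq k H A ρ (LinearMap.mul' k H)) ∘ₗ (LinearMap.lTensor A (HopfAlgebra.antipode (R := k)))

lemma Wmap_bijective (Sinv : H →ₗ[k] H)
    (hS1 : ∀ h : H, HopfAlgebra.antipode (R := k) (Sinv h) = h)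
    (hS2 : ∀ h : H, Sinv (HopfAlgebra.antipode (R := k) h) = h)
    (hcoassoc : IsCoassoc k H A ρ) (hcounit : IsCounital k H A ρ) :
    Function.Bijective (Wmap k H A ρ) := by
  have hXX1 := LinearMap.congr_fun (XqS_comp_Xmul k H A ρ hcoassoc hcounit)
  have hXX2 := LinearMap.congr_fun (Xmul_comp_XqS k H A ρ hcoassoc hcounit)
  simp only [LinearMap.comp_apply, LinearMap.id_apply] at hXX1 hXX2
  have hc2 : Sinv ∘ₗ (HopfAlgebra.antipode (R := k) (A := H)) = LinearMap.id :=
    LinearMap.ext hS2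
  have hc1 : (HopfAlgebra.antipode (R := k) (A := H)) ∘ₗ Sinv = LinearMap.id :=
    LinearMap.ext hS1
  have hll1 : ∀ z : A ⊗[k] H, LinearMap.lTensor A Sinv
      (LinearMap.lTensor A (HopfAlgebra.antipode (R := k)) z) = z := by
    intro z
    rw [← LinearMap.comp_apply, ← LinearMap.lTensor_comp, hc2,
      LinearMap.lTensor_id, LinearMap.id_apply]
  have hll2 : ∀ z : A ⊗[k] H, LinearMap.lTensor A (HopfAlgebra.antipode (R := k))
      (LinearMap.lTensor A Sinv z) = z := by
    intro z
    rw [← LinearMap.comp_apply, ← LinearMap.lTensor_comp, hc1,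
      LinearMap.lTensor_id, LinearMap.id_apply]
  refine Function.bijective_iff_has_inverse.mpr
    ⟨fun z => LinearMap.lTensor A Sinv (Xq k H A ρ (qS k H) z), ?_, ?_⟩
  · intro z
    simp only [Wmap, LinearMap.comp_apply]
    rw [hXX1, hll1]
  · intro z
    simp only [Wmap, LinearMap.comp_apply]
    rw [hll2, hXX2]

lemma Wmap_tmul_one (g : H) :
    Wmap k H A ρ ((1 : A) ⊗ₜ[k] g) = (1 : A) ⊗ₜ[k] (HopfAlgebra.antipode (R := k) g) := by
  simp only [Wmap, LinearMap.comp_apply, LinearMap.lTensor_tmul, Xq_tmul]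
  rw [map_one, Algebra.TensorProduct.one_def]
  simp

/-- Key factorization `χ̃ = W ∘ χ` at the level of `A ⊗[k] A`. -/
lemma chit0_eq_W_chi0 (hcoassoc : IsCoassoc k H A ρ) (hcounit : IsCounital k H A ρ) :
    chit0 k H A ρ = (Wmap k H A ρ) ∘ₗ (chi0 k H A ρ) := by
  apply TensorProduct.ext'
  intro x y
  have sA : ∀ (u v : A ⊗[k] H) (m : H),
      (LinearMap.lTensor A (LinearMap.mul' k H)) ((TensorProduct.assoc k A H H)
        ((u * v) ⊗ₜ[k] m))
      = u * (LinearMap.lTensor A (LinearMap.mul' k H)) ((TensorProduct.assoc k A H H)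
        (v ⊗ₜ[k] m)) := by
    intro u v m
    induction u using TensorProduct.induction_on with
    | zero => simp
    | tmul a p =>
        induction v using TensorProduct.induction_on with
        | zero => simp
        | tmul c n => simp [Algebra.TensorProduct.tmul_mul_tmul, mul_assoc]
        | add u' v' hu hv => simp only [mul_add, TensorProduct.add_tmul, map_add, hu, hv]
    | add u' v' hu hv => simp only [add_mul, TensorProduct.add_tmul, map_add, hu, hv]
  have suba : ∀ z : A ⊗[k] H,
      Wmap k H A ρ ((LinearMap.rTensor H (LinearMap.mulLeft k x)) z)
        = ρ x * Wmap k H A ρ z := by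
    intro z
    induction z using TensorProduct.induction_on with
    | zero => simp
    | tmul c n =>
        simp only [LinearMap.rTensor_tmul, LinearMap.mulLeft_apply, Wmap,
          LinearMap.comp_apply, LinearMap.lTensor_tmul, Xq_tmul]
        rw [map_mul]
        exact sA (ρ x) (ρ c) _
    | add u v hu hv => simp only [map_add, hu, hv, mul_add]
  have comm1 : ∀ z : A ⊗[k] H,
      (LinearMap.rTensor H ρ.toLinearMap)
        ((LinearMap.lTensor A (HopfAlgebra.antipode (R := k))) z)
      = (LinearMap.lTensor (A ⊗[k] H) (HopfAlgebra.antipode (R := k)))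
          ((LinearMap.rTensor H ρ.toLinearMap) z) := by
    intro z
    induction z using TensorProduct.induction_on with
    | zero => simp
    | tmul c n => simp
    | add u v hu hv => simp only [map_add, hu, hv]
  have s3 : ∀ (c : A) (w : H ⊗[k] H),
      (LinearMap.lTensor A (LinearMap.mul' k H)) ((TensorProduct.assoc k A H H)
        ((LinearMap.lTensor (A ⊗[k] H) (HopfAlgebra.antipode (R := k)))
          ((TensorProduct.assoc k A H H).symm (c ⊗ₜ[k] w))))
      = c ⊗ₜ[k] ((LinearMap.mul' k H)
          ((LinearMap.lTensor H (HopfAlgebra.antipode (R := k))) w)) := by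
    intro c w
    induction w using TensorProduct.induction_on with
    | zero => simp
    | tmul n₁ n₂ => simp
    | add u v hu hv => simp only [map_add, TensorProduct.tmul_add, hu, hv]
  have sB : ∀ z : A ⊗[k] H,
      (LinearMap.lTensor A (LinearMap.mul' k H)) ((TensorProduct.assoc k A H H)
        ((LinearMap.lTensor (A ⊗[k] H) (HopfAlgebra.antipode (R := k)))
          ((TensorProduct.assoc k A H H).symm
            ((LinearMap.lTensor A (Coalgebra.comul (R := k))) z))))
      = ((TensorProduct.rid k A) ((LinearMap.lTensor A (Coalgebra.counit (R := k))) z))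
          ⊗ₜ[k] (1 : H) := by
    intro z
    induction z using TensorProduct.induction_on with
    | zero => simp
    | tmul c n =>
        rw [LinearMap.lTensor_tmul, s3 c,
          HopfAlgebra.mul_antipode_lTensor_comul_apply (R := k) (A := H) n,
          LinearMap.lTensor_tmul, TensorProduct.rid_tmul, Algebra.algebraMap_eq_smul_one,
          TensorProduct.tmul_smul, TensorProduct.smul_tmul']
    | add u v hu hv => simp only [map_add, TensorProduct.add_tmul, hu, hv]
  have subb : Wmap k H A ρ (ρ y) = y ⊗ₜ[k] (1 : H) := by
    rw [show Wmap k H A ρ = (LinearMap.lTensor A (LinearMap.mul' k H))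
        ∘ₗ (TensorProduct.assoc k A H H).toLinearMap
        ∘ₗ (LinearMap.rTensor H ρ.toLinearMap)
        ∘ₗ (LinearMap.lTensor A (HopfAlgebra.antipode (R := k))) from rfl]
    simp only [LinearMap.comp_apply, LinearEquiv.coe_coe]
    rw [comm1 (ρ y), hcoassoc y, sB (ρ y), hcounit y]
  have final : ∀ z : A ⊗[k] H,
      z * (y ⊗ₜ[k] (1 : H)) = (LinearMap.rTensor H (LinearMap.mulRight k y)) z := by
    intro z
    induction z using TensorProduct.induction_on with
    | zero => simp
    | tmul c n => simp [Algebra.TensorProduct.tmul_mul_tmul]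
    | add u v hu hv => simp only [add_mul, map_add, hu, hv]
  rw [chit0_tmul, LinearMap.comp_apply, chi0_tmul, suba (ρ y), subb, final (ρ x)]

/-- Key factorization `χ̃ = W ∘ χ` on `A ⊗_B A`. -/
lemma chitq_eq_W_chiq (hcoassoc : IsCoassoc k H A ρ) (hcounit : IsCounital k H A ρ) :
    chitq k H A ρ = (Wmap k H A ρ) ∘ₗ (chiq k H A ρ) := by
  refine Submodule.linearMap_qext _ ?_
  rw [chitq, Submodule.liftQ_mkQ, LinearMap.comp_assoc, chiq, Submodule.liftQ_mkQ]
  exact chit0_eq_W_chi0 k H A ρ hcoassoc hcounit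

/-- `χ̃` intertwines right multiplication. -/
lemma chitq_rmulT (a : A) :
    (chitq k H A ρ) ∘ₗ (rmulT k H A ρ a)
      = (LinearMap.rTensor H (LinearMap.mulRight k a)) ∘ₗ (chitq k H A ρ) := by
  refine Submodule.linearMap_qext _ ?_
  apply TensorProduct.ext'
  intro x y
  simp only [LinearMap.comp_apply, Submodule.mkQ_apply, rmulT, chitq, mkT,
    Submodule.liftQ_apply, LinearMap.lTensor_tmul, LinearMap.mulRight_apply, chit0_tmul]
  rw [LinearMap.mulRight_mul, LinearMap.rTensor_comp, LinearMap.comp_apply]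


/-- For a Hopf-Galois extension `B = A^{co H} ⊆ A` over a Hopf algebra `H`
with invertible antipode, the second Galois map `χ̃ : A ⊗_B A → A ⊗ H`,
`a ⊗ a' ↦ a₍₀₎ a' ⊗ a₍₁₎`, is bijective, with inverse
`a ⊗ h ↦ S⁻¹(h)⁽¹⁾ ⊗_B S⁻¹(h)⁽²⁾ a = τ(S⁻¹ h)·a`. -/
theorem second_galois_map_bijective
    (Sinv : H →ₗ[k] H)
    (hS1 : ∀ h : H, HopfAlgebra.antipode (R := k) (Sinv h) = h)
    (hS2 : ∀ h : H, Sinv (HopfAlgebra.antipode (R := k) h) = h)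
    (hcoassoc : IsCoassoc k H A ρ) (hcounit : IsCounital k H A ρ)
    (hGal : Function.Bijective (chiq k H A ρ))
    (τ : H →ₗ[k] HGT k H A ρ)
    (hτ : ∀ h : H, chiq k H A ρ (τ h) = (1 : A) ⊗ₜ[k] h) :
    Function.Bijective (chitq k H A ρ)
      ∧ ∀ (a : A) (h : H), chitq k H A ρ (rmulT k H A ρ a (τ (Sinv h))) = a ⊗ₜ[k] h := by
  have heq := chitq_eq_W_chiq k H A ρ hcoassoc hcounit
  constructor
  · rw [heq, LinearMap.coe_comp]
    exact (Wmap_bijective k H A ρ Sinv hS1 hS2 hcoassoc hcounit).comp hGal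
  · intro a h
    have h1 := LinearMap.congr_fun (chitq_rmulT k H A ρ a) (τ (Sinv h))
    simp only [LinearMap.comp_apply] at h1
    rw [h1, heq, LinearMap.comp_apply, hτ, Wmap_tmul_one, hS1]
    simp


end
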